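/- Under the split Bregman iteration setting, suppose β* ∈ ℝ^p is a global minimizer of Φ(β) = V(β) + λ₁‖β‖₁ + λ₂‖Lβ‖₁, and let h* ∈ ∂V(β*), p* ∈ ∂‖·‖₁(β*), q* ∈ ∂‖·‖₁(Lβ*) satisfy h* + λ₁p* + λ₂Lᵀq* = 0. Then the Bregman distance of V along the iterates vanishes: lim_{k→∞} [ V(β^k) − V(β*) − ⟨h*, β^k − β*⟩ ] = 0. -/
import Mathlib


open Filter Matrix Finset

/-- The ℓ1 norm on `Fin d → ℝ`. -/
noncomputable def l1 {d : ℕ} (x : Fin d → ℝ) : ℝ := ∑ i, |x i|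

/-- The Euclidean (ℓ2) norm on `Fin d → ℝ`. -/
noncomputable def l2 {d : ℕ} (x : Fin d → ℝ) : ℝ := Real.sqrt (∑ i, (x i) ^ 2)

/-- The Euclidean inner product on `Fin d → ℝ`. -/
def dotp {d : ℕ} (x y : Fin d → ℝ) : ℝ := ∑ i, x i * y i

/-- `g` is a subgradient of `f` at `x`. -/
def IsSubgrad {d : ℕ} (f : (Fin d → ℝ) → ℝ) (x g : Fin d → ℝ) : Prop :=
  ∀ z, f z ≥ f x + dotp g (z - x)

lemma dotp_add_left {d : ℕ} (x y z : Fin d → ℝ) : dotp (x + y) z = dotp x z + dotp y z := by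
  simp [dotp, add_mul, Finset.sum_add_distrib]

lemma dotp_add_right {d : ℕ} (x y z : Fin d → ℝ) : dotp x (y + z) = dotp x y + dotp x z := by
  simp [dotp, mul_add, Finset.sum_add_distrib]

lemma dotp_sub_left {d : ℕ} (x y z : Fin d → ℝ) : dotp (x - y) z = dotp x z - dotp y z := by
  simp [dotp, sub_mul, Finset.sum_sub_distrib]

lemma dotp_sub_right {d : ℕ} (x y z : Fin d → ℝ) : dotp x (y - z) = dotp x y - dotp x z := by
  simp [dotp, mul_sub, Finset.sum_sub_distrib]

lemma dotp_smul_left {d : ℕ} (c : ℝ) (x y : Fin d → ℝ) : dotp (c • x) y = c * dotp x y := by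
  simp [dotp, Finset.mul_sum, mul_assoc]

lemma dotp_smul_right {d : ℕ} (c : ℝ) (x y : Fin d → ℝ) : dotp x (c • y) = c * dotp x y := by
  simp [dotp, Finset.mul_sum, mul_left_comm]

lemma dotp_neg_right {d : ℕ} (x y : Fin d → ℝ) : dotp x (-y) = - dotp x y := by
  simp [dotp]

lemma dotp_zero_left {d : ℕ} (y : Fin d → ℝ) : dotp 0 y = 0 := by simp [dotp]

lemma dotp_comm {d : ℕ} (x y : Fin d → ℝ) : dotp x y = dotp y x := by
  simp [dotp, mul_comm]

lemma dotp_self_nonneg {d : ℕ} (x : Fin d → ℝ) : 0 ≤ dotp x x :=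
  Finset.sum_nonneg fun i _ => mul_self_nonneg _

lemma dotp_mulVecT {m p : ℕ} (M : Matrix (Fin m) (Fin p) ℝ) (y : Fin m → ℝ) (x : Fin p → ℝ) :
    dotp (M.transpose.mulVec y) x = dotp y (M.mulVec x) := by
  show Mᵀ.mulVec y ⬝ᵥ x = y ⬝ᵥ M.mulVec x
  rw [Matrix.mulVec_transpose, ← Matrix.dotProduct_mulVec]

lemma dotp_expand {d : ℕ} (x s : Fin d → ℝ) :
    dotp (x + s) (x + s) = dotp x x + 2 * dotp x s + dotp s s := by
  rw [dotp_add_left, dotp_add_right, dotp_add_right, dotp_comm s x]; ring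

lemma dotp_sub_expand {d : ℕ} (x s : Fin d → ℝ) :
    dotp (x - s) (x - s) = dotp x x - 2 * dotp x s + dotp s s := by
  rw [dotp_sub_left, dotp_sub_right, dotp_sub_right, dotp_comm s x]; ring

lemma mulVec_smul' {m p : ℕ} (M : Matrix (Fin m) (Fin p) ℝ) (c : ℝ) (x : Fin p → ℝ) :
    M.mulVec (c • x) = c • M.mulVec x := by
  ext i
  simp [Matrix.mulVec, dotProduct, Finset.mul_sum, mul_left_comm]

/-- The Bregman distance of `V` along the split Bregman iterates vanishes. -/
theorem splitBregman_bregmanDistance_V_vanishes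
    {p m : ℕ} (hp : 0 < p) (hm : 0 < m)
    (V : (Fin p → ℝ) → ℝ) (hV : ConvexOn ℝ Set.univ V)
    (L : Matrix (Fin m) (Fin p) ℝ)
    (lam1 lam2 mu1 mu2 del1 del2 : ℝ)
    (hlam1 : 0 < lam1) (hlam2 : 0 < lam2)
    (hmu1 : 0 < mu1) (hmu2 : 0 < mu2)
    (hdel1 : 0 < del1) (hdel1' : del1 ≤ mu1)
    (hdel2 : 0 < del2) (hdel2' : del2 ≤ mu2)
    (Beta a u h pp : ℕ → Fin p → ℝ)
    (b v qq : ℕ → Fin m → ℝ)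
    (hh : ∀ k : ℕ, IsSubgrad V (Beta (k+1)) (h (k+1)))
    (hpp : ∀ k : ℕ, IsSubgrad l1 (a (k+1)) (pp (k+1)))
    (hqq : ∀ k : ℕ, IsSubgrad l1 (b (k+1)) (qq (k+1)))
    (iter1 : ∀ k : ℕ, (0 : Fin p → ℝ) =
      h (k+1) + u k + L.transpose.mulVec (v k)
        + mu1 • (Beta (k+1) - a k)
        + mu2 • L.transpose.mulVec (L.mulVec (Beta (k+1)) - b k))
    (iter2 : ∀ k : ℕ, lam1 • pp (k+1) - u k + mu1 • (a (k+1) - Beta (k+1)) = 0)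
    (iter3 : ∀ k : ℕ, lam2 • qq (k+1) - v k + mu2 • (b (k+1) - L.mulVec (Beta (k+1))) = 0)
    (iter4 : ∀ k : ℕ, u (k+1) = u k + del1 • (Beta (k+1) - a (k+1)))
    (iter5 : ∀ k : ℕ, v (k+1) = v k + del2 • (L.mulVec (Beta (k+1)) - b (k+1)))
    (Bstar hstar pstar : Fin p → ℝ) (qstar : Fin m → ℝ)
    (hmin : ∀ x : Fin p → ℝ,
      V Bstar + lam1 * l1 Bstar + lam2 * l1 (L.mulVec Bstar)
        ≤ V x + lam1 * l1 x + lam2 * l1 (L.mulVec x))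
    (hhs : IsSubgrad V Bstar hstar)
    (hps : IsSubgrad l1 Bstar pstar)
    (hqs : IsSubgrad l1 (L.mulVec Bstar) qstar)
    (hopt : hstar + lam1 • pstar + lam2 • L.transpose.mulVec qstar = 0) :
    Tendsto (fun k : ℕ => V (Beta k) - V Bstar - dotp hstar (Beta k - Bstar))
      atTop (nhds 0) := by
  set E : ℕ → ℝ := fun k =>
      del2 * dotp (u k - lam1 • pstar) (u k - lam1 • pstar)
    + del1 * del2 * mu1 * dotp (a k - Bstar) (a k - Bstar)
    + del1 * dotp (v k - lam2 • qstar) (v k - lam2 • qstar)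
    + del1 * del2 * mu2 * dotp (b k - L.mulVec Bstar) (b k - L.mulVec Bstar)
    with hE
  have key : ∀ k : ℕ,
      2*del1*del2 * (V (Beta (k+1)) - V Bstar - dotp hstar (Beta (k+1) - Bstar)) + E (k+1)
        ≤ E k := by
    intro k
    simp only [hE]
    set X := Beta (k+1) - Bstar with hX
    set A0 := a k - Bstar with hA0
    set A1 := a (k+1) - Bstar with hA1
    set B0e := b k - L.mulVec Bstar with hB0e
    set B1e := b (k+1) - L.mulVec Bstar with hB1e
    -- vector identities in error form
    have I : (h (k+1) - hstar) + (u k - lam1 • pstar)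
        + L.transpose.mulVec (v k - lam2 • qstar)
        + mu1 • (X - A0)
        + mu2 • L.transpose.mulVec (L.mulVec X - B0e) = 0 := by
      have hw : L.mulVec X - B0e = L.mulVec (Beta (k+1)) - b k := by
        rw [hX, hB0e, Matrix.mulVec_sub]; abel
      rw [hw, hX, hA0, Matrix.mulVec_sub, mulVec_smul']
      linear_combination (norm := module) -(iter1 k) - hopt
    have II : lam1 • (pp (k+1) - pstar) - (u k - lam1 • pstar) + mu1 • (A1 - X) = 0 := by
      rw [hA1, hX]
      linear_combination (norm := module) iter2 k
    have III : lam2 • (qq (k+1) - qstar) - (v k - lam2 • qstar)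
        + mu2 • (B1e - L.mulVec X) = 0 := by
      rw [hB1e, hX, Matrix.mulVec_sub]
      linear_combination (norm := module) iter3 k
    have IV : u (k+1) - lam1 • pstar = (u k - lam1 • pstar) + del1 • (X - A1) := by
      rw [hX, hA1]
      linear_combination (norm := module) iter4 k
    have Vq : v (k+1) - lam2 • qstar = (v k - lam2 • qstar) + del2 • (L.mulVec X - B1e) := by
      rw [hX, hB1e, Matrix.mulVec_sub]
      linear_combination (norm := module) iter5 k
    set H := h (k+1) - hstar with hH
    set P := pp (k+1) - pstar with hP
    set Q := qq (k+1) - qstar with hQ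
    set U0 := u k - lam1 • pstar with hU0
    set U1 := u (k+1) - lam1 • pstar with hU1
    set V0 := v k - lam2 • qstar with hV0
    set V1 := v (k+1) - lam2 • qstar with hV1
    -- scalar identities
    have sA : dotp H X + dotp U0 X + dotp V0 (L.mulVec X)
        + mu1 * (dotp X X - dotp A0 X)
        + mu2 * (dotp (L.mulVec X) (L.mulVec X) - dotp B0e (L.mulVec X)) = 0 := by
      have t := congrArg (fun z => dotp z X) I
      simp only [dotp_add_left, dotp_smul_left, dotp_sub_left, dotp_zero_left,
        dotp_mulVecT] at t
      linear_combination t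
    have sB : lam1 * dotp P A1 - dotp U0 A1 + mu1 * (dotp A1 A1 - dotp X A1) = 0 := by
      have t := congrArg (fun z => dotp z A1) II
      simp only [dotp_add_left, dotp_smul_left, dotp_sub_left, dotp_zero_left] at t
      linear_combination t
    have sC : lam2 * dotp Q B1e - dotp V0 B1e
        + mu2 * (dotp B1e B1e - dotp (L.mulVec X) B1e) = 0 := by
      have t := congrArg (fun z => dotp z B1e) III
      simp only [dotp_add_left, dotp_smul_left, dotp_sub_left, dotp_zero_left] at t
      linear_combination t
    have sD : dotp U1 U1 = dotp U0 U0 + 2*del1*dotp U0 X - 2*del1*dotp U0 A1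
        + del1^2 * dotp (X - A1) (X - A1) := by
      rw [IV, dotp_expand]
      simp only [dotp_smul_left, dotp_smul_right]
      rw [dotp_sub_right U0 X A1]
      ring
    have sE : dotp V1 V1 = dotp V0 V0 + 2*del2*dotp V0 (L.mulVec X) - 2*del2*dotp V0 B1e
        + del2^2 * dotp (L.mulVec X - B1e) (L.mulVec X - B1e) := by
      rw [Vq, dotp_expand]
      simp only [dotp_smul_left, dotp_smul_right]
      rw [dotp_sub_right V0 (L.mulVec X) B1e]
      ring
    have main : (del2 * dotp U0 U0 + del1*del2*mu1 * dotp A0 A0 + del1 * dotp V0 V0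
          + del1*del2*mu2 * dotp B0e B0e)
        - (del2 * dotp U1 U1 + del1*del2*mu1 * dotp A1 A1 + del1 * dotp V1 V1
          + del1*del2*mu2 * dotp B1e B1e)
        = 2*del1*del2*(dotp H X + lam1 * dotp P A1 + lam2 * dotp Q B1e)
        + del1*del2*((mu1-del1) * dotp (X - A1) (X - A1)
          + mu1 * dotp (X - A0) (X - A0)
          + (mu2-del2) * dotp (L.mulVec X - B1e) (L.mulVec X - B1e)
          + mu2 * dotp (L.mulVec X - B0e) (L.mulVec X - B0e)) := by
      linear_combination (-(2*del1*del2)) * sA + (-(2*del1*del2)) * sB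
        + (-(2*del1*del2)) * sC + (-del2) * sD + (-del1) * sE
        + (-(del1*del2*mu1)) * dotp_sub_expand X A0
        + (-(del1*del2*mu1)) * dotp_sub_expand X A1
        + (-(del1*del2*mu2)) * dotp_sub_expand (L.mulVec X) B0e
        + (-(del1*del2*mu2)) * dotp_sub_expand (L.mulVec X) B1e
        + (2*del1*del2*mu1) * dotp_comm X A0
        + (2*del1*del2*mu2) * dotp_comm (L.mulVec X) B0e
    -- monotonicity of subgradients
    have mono1 : V (Beta (k+1)) - V Bstar - dotp hstar X ≤ dotp H X := by
      have t := hh k Bstar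
      have e : dotp (h (k+1)) (Bstar - Beta (k+1)) = - dotp (h (k+1)) X := by
        rw [hX, show Bstar - Beta (k+1) = -(Beta (k+1) - Bstar) from by abel, dotp_neg_right]
      rw [e] at t
      have eH : dotp H X = dotp (h (k+1)) X - dotp hstar X := by
        rw [hH, dotp_sub_left]
      linarith
    have mono2 : 0 ≤ dotp P A1 := by
      have t1 := hpp k Bstar
      have t2 := hps (a (k+1))
      have e1 : dotp (pp (k+1)) (Bstar - a (k+1)) = - dotp (pp (k+1)) A1 := by
        rw [hA1, show Bstar - a (k+1) = -(a (k+1) - Bstar) from by abel, dotp_neg_right]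
      have e2 : dotp pstar (a (k+1) - Bstar) = dotp pstar A1 := by rw [hA1]
      rw [e1] at t1
      rw [e2] at t2
      have eP : dotp P A1 = dotp (pp (k+1)) A1 - dotp pstar A1 := by rw [hP, dotp_sub_left]
      linarith
    have mono3 : 0 ≤ dotp Q B1e := by
      have t1 := hqq k (L.mulVec Bstar)
      have t2 := hqs (b (k+1))
      have e1 : dotp (qq (k+1)) (L.mulVec Bstar - b (k+1)) = - dotp (qq (k+1)) B1e := by
        rw [hB1e, show L.mulVec Bstar - b (k+1) = -(b (k+1) - L.mulVec Bstar) from by abel,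
          dotp_neg_right]
      have e2 : dotp qstar (b (k+1) - L.mulVec Bstar) = dotp qstar B1e := by rw [hB1e]
      rw [e1] at t1
      rw [e2] at t2
      have eQ : dotp Q B1e = dotp (qq (k+1)) B1e - dotp qstar B1e := by rw [hQ, dotp_sub_left]
      linarith
    -- assemble
    have m1 : 2*del1*del2 * (V (Beta (k+1)) - V Bstar - dotp hstar X)
        ≤ 2*del1*del2 * dotp H X :=
      mul_le_mul_of_nonneg_left mono1 (by positivity)
    have m2 : 0 ≤ 2*del1*del2*(lam1 * dotp P A1) :=
      mul_nonneg (by positivity) (mul_nonneg hlam1.le mono2)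
    have m3 : 0 ≤ 2*del1*del2*(lam2 * dotp Q B1e) :=
      mul_nonneg (by positivity) (mul_nonneg hlam2.le mono3)
    have q1 : 0 ≤ del1*del2*((mu1-del1) * dotp (X - A1) (X - A1)) :=
      mul_nonneg (by positivity)
        (mul_nonneg (by linarith) (dotp_self_nonneg _))
    have q2 : 0 ≤ del1*del2*(mu1 * dotp (X - A0) (X - A0)) :=
      mul_nonneg (by positivity) (mul_nonneg hmu1.le (dotp_self_nonneg _))
    have q3 : 0 ≤ del1*del2*((mu2-del2) * dotp (L.mulVec X - B1e) (L.mulVec X - B1e)) :=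
      mul_nonneg (by positivity)
        (mul_nonneg (by linarith) (dotp_self_nonneg _))
    have q4 : 0 ≤ del1*del2*(mu2 * dotp (L.mulVec X - B0e) (L.mulVec X - B0e)) :=
      mul_nonneg (by positivity) (mul_nonneg hmu2.le (dotp_self_nonneg _))
    linarith
  have Dnn : ∀ k : ℕ, 0 ≤ V (Beta k) - V Bstar - dotp hstar (Beta k - Bstar) := by
    intro k
    have := hhs (Beta k)
    linarith
  have Enn : ∀ k : ℕ, 0 ≤ E k := by
    intro k
    simp only [hE]
    have h1 := dotp_self_nonneg (u k - lam1 • pstar)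
    have h2 := dotp_self_nonneg (a k - Bstar)
    have h3 := dotp_self_nonneg (v k - lam2 • qstar)
    have h4 := dotp_self_nonneg (b k - L.mulVec Bstar)
    have c1 : (0:ℝ) ≤ del2 := hdel2.le
    have c2 : (0:ℝ) ≤ del1 * del2 * mu1 := by positivity
    have c3 : (0:ℝ) ≤ del1 := hdel1.le
    have c4 : (0:ℝ) ≤ del1 * del2 * mu2 := by positivity
    have := mul_nonneg c1 h1
    have := mul_nonneg c2 h2
    have := mul_nonneg c3 h3
    have := mul_nonneg c4 h4
    linarith
  have pos : (0:ℝ) < 2*del1*del2 := by positivity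
  have tele : ∀ n : ℕ,
      2*del1*del2 * (∑ i ∈ Finset.range n,
        (V (Beta (i+1)) - V Bstar - dotp hstar (Beta (i+1) - Bstar))) + E n ≤ E 0 := by
    intro n
    induction n with
    | zero => simp
    | succ n ih =>
      rw [Finset.sum_range_succ]
      have := key n
      nlinarith [key n, ih]
  have sb : Summable (fun n : ℕ =>
      V (Beta (n+1)) - V Bstar - dotp hstar (Beta (n+1) - Bstar)) := by
    apply summable_of_sum_range_le (c := E 0 / (2*del1*del2)) (fun n => Dnn (n+1))
    intro n
    rw [le_div_iff₀ pos]
    nlinarith [tele n, Enn n]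
  have t0 := sb.tendsto_atTop_zero
  exact (tendsto_add_atTop_iff_nat 1).mp t0
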